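/- Let X = {x ∈ ℝⁿ : A x ≤ b} be a nonempty bounded polyhedron and c ∈ ℝⁿ, and suppose the linear program min_{x ∈ X} c·x has a unique optimal solution x⋆. Fix x⁰ ∈ ℝⁿ and let θ ≥ θ_c, where θ_c > 0 is such that P_X(x⁰ − θ c) = x⋆ for all θ ≥ θ_c. Set b^c = b − A(x⁰ − θ c), Ā_c = [A | −b^c], K_c = { Ā_cᵀ u : u ∈ ℝᵐ, u ≥ 0 } ⊆ ℝⁿ⁺¹, ē = (0,…,0,1), z⋆ = P_{K_c}(ē), and γ = ‖z⋆ − ē‖. Then γ > 0, (ē − z⋆)/γ² = (y, 1) for some y ∈ ℝⁿ, and x⋆ = y + x⁰ − θ c. -/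

import Mathlib

open scoped RealInnerProductSpace
open Matrix

private lemma euclid_inner {k : ℕ} (x y : EuclideanSpace ℝ (Fin k)) :
    ⟪x, y⟫ = ∑ i, x i * y i := by
  simp [PiLp.inner_apply, RCLike.inner_apply, mul_comm]

private lemma proj_VI {E : Type*} [NormedAddCommGroup E] [InnerProductSpace ℝ E]
    {K : Set E} (hK : Convex ℝ K) {u v : E} (hv : v ∈ K)
    (hmin : ∀ w ∈ K, dist u v ≤ dist u w) :
    ∀ w ∈ K, ⟪u - v, w - v⟫ ≤ 0 := by
  haveI : Nonempty K := ⟨⟨v, hv⟩⟩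
  rw [← norm_eq_iInf_iff_real_inner_le_zero hK hv]
  refine le_antisymm (le_ciInf fun w => by simpa [dist_eq_norm] using hmin w w.2)
    (ciInf_le (f := fun w : K => ‖u - w‖) ⟨0, fun x ⟨w, hw⟩ => hw ▸ norm_nonneg _⟩ ⟨v, hv⟩)

private lemma inner_symm_mulVec {k m : ℕ} (v : EuclideanSpace ℝ (Fin k))
    (M : Matrix (Fin m) (Fin k) ℝ) (u : Fin m → ℝ) :
    ⟪v, (WithLp.equiv 2 (Fin k → ℝ)).symm (M.transpose.mulVec u)⟫ = u ⬝ᵥ (M.mulVec v) := by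
  rw [euclid_inner]
  have h : ∑ i, v i * ((WithLp.equiv 2 (Fin k → ℝ)).symm (M.transpose.mulVec u)) i
      = v ⬝ᵥ (M.transpose.mulVec u) := by
    simp [dotProduct, WithLp.equiv_symm_apply, PiLp.toLp_apply]
  rw [h, dotProduct_mulVec, Matrix.vecMul_transpose, dotProduct_comm]


/-- For a nonempty bounded polyhedron `X = {x : A x ≤ b}` whose linear
program `min_{x∈X} c·x` has a unique solution `x⋆`, fix `x⁰` and `θ ≥ θ_c` where `θ_c > 0`
ensures `P_X(x⁰ − θ' c) = x⋆` for all `θ' ≥ θ_c`. With `b^c = b − A(x⁰ − θ c)`,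
`Ā_c = [A | −b^c]`, `K_c = {Ā_cᵀu : u ≥ 0}`, `ē = (0,…,0,1)`, `z⋆ = P_{K_c}(ē)` and
`γ = ‖z⋆ − ē‖`: `γ > 0`, `(ē − z⋆)/γ² = (y, 1)` for some `y`, and `x⋆ = y + x⁰ − θ c`. -/
theorem conic_projection_solves_lp
    (m n : ℕ) (A : Matrix (Fin m) (Fin n) ℝ) (b : Fin m → ℝ)
    (X : Set (EuclideanSpace ℝ (Fin n)))
    (hX : X = {x : EuclideanSpace ℝ (Fin n) | A.mulVec x ≤ b})
    (hXbdd : Bornology.IsBounded X)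
    (c xstar : EuclideanSpace ℝ (Fin n))
    (hopt : xstar ∈ X ∧ ∀ y ∈ X, ⟪c, xstar⟫ ≤ ⟪c, y⟫)
    (huniq : ∀ y ∈ X, ⟪c, y⟫ = ⟪c, xstar⟫ → y = xstar)
    (x0 : EuclideanSpace ℝ (Fin n)) (θc θ : ℝ) (hθc : 0 < θc) (hθ : θc ≤ θ)
    (hproj : ∀ θ' : ℝ, θc ≤ θ' →
      ∀ z ∈ X, dist (x0 - θ' • c) xstar ≤ dist (x0 - θ' • c) z)
    (bc : Fin m → ℝ) (hbc : bc = b - A.mulVec (x0 - θ • c))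
    (Abarc : Matrix (Fin m) (Fin (n + 1)) ℝ)
    (hAbarc : Abarc = Matrix.of fun i => Fin.snoc (A i) (-(bc i)))
    (Kc : Set (EuclideanSpace ℝ (Fin (n + 1))))
    (hKc : Kc = {z : EuclideanSpace ℝ (Fin (n + 1)) | ∃ u : Fin m → ℝ, 0 ≤ u ∧
        z = (WithLp.equiv 2 (Fin (n + 1) → ℝ)).symm (Abarc.transpose.mulVec u)})
    (ebar : EuclideanSpace ℝ (Fin (n + 1)))
    (hebar : ebar = EuclideanSpace.single (Fin.last n) 1)
    (zstar : EuclideanSpace ℝ (Fin (n + 1)))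
    (hzstar : zstar ∈ Kc ∧ ∀ z ∈ Kc, dist ebar zstar ≤ dist ebar z)
    (γ : ℝ) (hγ : γ = ‖zstar - ebar‖) :
    0 < γ ∧
      ∃ y : EuclideanSpace ℝ (Fin n),
        (γ ^ 2)⁻¹ • (ebar - zstar) =
            (WithLp.equiv 2 (Fin (n + 1) → ℝ)).symm (Fin.snoc y 1) ∧
        xstar = y + x0 - θ • c := by
  obtain ⟨hzK, hzmin⟩ := hzstar
  obtain ⟨hxX, -⟩ := hopt
  set xb : EuclideanSpace ℝ (Fin n) := x0 - θ • c with hxbdef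
  have hxXb : A.mulVec xstar ≤ b := by
    have h := hxX; rw [hX] at h; exact h
  -- rows of Abarc acting on snoc vectors
  have hrow : ∀ (i : Fin m) (v : Fin n → ℝ) (t : ℝ),
      (Abarc.mulVec (Fin.snoc v t)) i = (A.mulVec v) i - t * bc i := by
    intro i v t
    rw [hAbarc]
    simp only [Matrix.mulVec, dotProduct, Matrix.of_apply]
    rw [Fin.sum_univ_castSucc]
    simp only [Fin.snoc_castSucc, Fin.snoc_last]
    ring
  -- convexity of Kc
  have hKconv : Convex ℝ Kc := by
    rw [hKc]
    rintro z1 ⟨u1, hu1, rfl⟩ z2 ⟨u2, hu2, rfl⟩ a a' ha ha' haa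
    refine ⟨a • u1 + a' • u2,
      fun i => add_nonneg (mul_nonneg ha (hu1 i)) (mul_nonneg ha' (hu2 i)), ?_⟩
    ext j
    simp [WithLp.equiv_symm_apply, PiLp.toLp_apply, Matrix.mulVec_add, Matrix.mulVec_smul,
      PiLp.add_apply, PiLp.smul_apply, smul_eq_mul]
  have hmemK : ∀ u : Fin m → ℝ, 0 ≤ u →
      (WithLp.equiv 2 (Fin (n + 1) → ℝ)).symm (Abarc.transpose.mulVec u) ∈ Kc := by
    intro u hu; rw [hKc]; exact ⟨u, hu, rfl⟩
  have hVI : ∀ k ∈ Kc, ⟪ebar - zstar, k - zstar⟫ ≤ 0 := proj_VI hKconv hzK hzmin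
  have h0K : (0 : EuclideanSpace ℝ (Fin (n + 1))) ∈ Kc := by
    rw [hKc]
    refine ⟨0, le_refl _, ?_⟩
    ext j
    simp [WithLp.equiv_symm_apply, PiLp.toLp_apply, Matrix.mulVec_zero]
  have h2K : (2 : ℝ) • zstar ∈ Kc := by
    have h := hzK; rw [hKc] at h ⊢
    obtain ⟨u, hu, rfl⟩ := h
    refine ⟨(2 : ℝ) • u, fun i => by
      have h' := hu i
      simp only [Pi.zero_apply] at h' ⊢
      simp only [Pi.smul_apply, smul_eq_mul]
      linarith, ?_⟩
    ext j
    simp [WithLp.equiv_symm_apply, PiLp.toLp_apply, Matrix.mulVec_smul, PiLp.smul_apply, smul_eq_mul]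
  have horth : ⟪ebar - zstar, zstar⟫ = 0 := by
    have h1 := hVI 0 h0K
    have h2 := hVI ((2 : ℝ) • zstar) h2K
    rw [zero_sub, inner_neg_right] at h1
    have e1 : (2 : ℝ) • zstar - zstar = zstar := by
      rw [two_smul]; abel
    rw [e1] at h2
    linarith
  have hKle : ∀ k ∈ Kc, ⟪ebar - zstar, k⟫ ≤ 0 := by
    intro k hk
    have h := hVI k hk
    rw [inner_sub_right, horth, sub_zero] at h
    exact h
  -- zstar representation
  obtain ⟨uz, huz, hzu⟩ : ∃ u : Fin m → ℝ, 0 ≤ u ∧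
      zstar = (WithLp.equiv 2 (Fin (n + 1) → ℝ)).symm (Abarc.transpose.mulVec u) := by
    have h := hzK; rw [hKc] at h; exact h
  -- γ > 0
  have hγnn : 0 ≤ γ := hγ ▸ norm_nonneg _
  have hγpos : 0 < γ := by
    rcases eq_or_lt_of_le hγnn with h | h
    · exfalso
      have hze : zstar = ebar := by
        rw [hγ] at h
        exact sub_eq_zero.mp (norm_eq_zero.mp h.symm)
      have hcoord : ∀ j, (Abarc.transpose.mulVec uz) j
          = (EuclideanSpace.single (Fin.last n) (1 : ℝ) : EuclideanSpace ℝ (Fin (n + 1))) j := by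
        intro j
        have h1 := congrArg (fun z : EuclideanSpace ℝ (Fin (n + 1)) => z j) hzu
        rw [hze, hebar] at h1
        simpa [WithLp.equiv_symm_apply, PiLp.toLp_apply] using h1.symm
      have hfront : ∀ j : Fin n, ∑ i, A i j * uz i = 0 := by
        intro j
        have h1 := hcoord (Fin.castSucc j)
        have h2 : (Abarc.transpose.mulVec uz) (Fin.castSucc j) = ∑ i, A i j * uz i := by
          simp only [Matrix.mulVec, dotProduct, Matrix.transpose_apply, hAbarc,
            Matrix.of_apply, Fin.snoc_castSucc]
        rw [h2] at h1
        rw [h1, EuclideanSpace.single_apply, if_neg (Fin.castSucc_lt_last j).ne]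
      have hlast : ∑ i, bc i * uz i = -1 := by
        have h1 := hcoord (Fin.last n)
        have h2 : (Abarc.transpose.mulVec uz) (Fin.last n) = ∑ i, -(bc i) * uz i := by
          simp only [Matrix.mulVec, dotProduct, Matrix.transpose_apply, hAbarc,
            Matrix.of_apply, Fin.snoc_last]
        rw [h2, EuclideanSpace.single_apply, if_pos rfl] at h1
        have h3 : ∑ i, -(bc i) * uz i = -∑ i, bc i * uz i := by
          rw [← Finset.sum_neg_distrib]
          exact Finset.sum_congr rfl fun i _ => by ring
        rw [h3] at h1
        linarith
      set wst : Fin n → ℝ := fun j => xstar j - xb j with hwst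
      have hAwst : ∀ i, (A.mulVec wst) i ≤ bc i := by
        intro i
        have e : (A.mulVec wst) i = (A.mulVec xstar) i - (A.mulVec xb) i := by
          simp only [Matrix.mulVec, dotProduct, hwst, mul_sub]
          rw [Finset.sum_sub_distrib]
        rw [e, hbc]
        have := hxXb i
        simp only [Pi.sub_apply]
        have hxbo : (A *ᵥ xb.ofLp) i = (A *ᵥ (x0.ofLp - θ • c.ofLp)) i := rfl
        linarith
      have e0 : ∑ i, uz i * (A.mulVec wst) i = 0 := by
        have : (∑ i, uz i * (A.mulVec wst) i) = uz ⬝ᵥ (A.mulVec wst) := rfl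
        rw [this, dotProduct_mulVec]
        have hv : uz ᵥ* A = 0 := by
          funext j
          have : (uz ᵥ* A) j = ∑ i, uz i * A i j := rfl
          rw [this]
          simp only [Pi.zero_apply]
          rw [← hfront j]
          exact Finset.sum_congr rfl fun i _ => mul_comm _ _
        rw [hv, zero_dotProduct]
      have e1 : ∑ i, uz i * (A.mulVec wst) i ≤ ∑ i, uz i * bc i :=
        Finset.sum_le_sum fun i _ => mul_le_mul_of_nonneg_left (hAwst i) (huz i)
      have e2 : ∑ i, uz i * bc i = -1 := by
        rw [← hlast]
        exact Finset.sum_congr rfl fun i _ => mul_comm _ _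
      linarith [e0, e1, e2]
    · exact h
  have hγ2 : (γ : ℝ)^2 ≠ 0 := by positivity
  have hγ2pos : 0 < (γ : ℝ)^2 := by positivity
  have hnormr : ⟪ebar - zstar, ebar - zstar⟫ = γ ^ 2 := by
    rw [real_inner_self_eq_norm_sq, hγ, norm_sub_rev]
  have hrlast : (ebar - zstar) (Fin.last n) = γ ^ 2 := by
    have h1 : ⟪ebar - zstar, ebar⟫ = (ebar - zstar) (Fin.last n) := by
      rw [hebar, euclid_inner]
      simp [EuclideanSpace.single_apply]
    have h2 : ⟪ebar - zstar, ebar⟫ = ⟪ebar - zstar, ebar - zstar⟫ + ⟪ebar - zstar, zstar⟫ := by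
      rw [← inner_add_right, sub_add_cancel]
    rw [h2, horth, add_zero, hnormr] at h1
    exact h1.symm
  set w : Fin n → ℝ := fun j => (ebar - zstar) (Fin.castSucc j) with hwdef
  -- A w ≤ γ² bc
  have harg : (WithLp.equiv 2 (Fin (n + 1) → ℝ)) (ebar - zstar) = Fin.snoc w (γ ^ 2) := by
    funext j
    induction j using Fin.lastCases with
    | last => rw [Fin.snoc_last]; exact hrlast
    | cast j' => rw [Fin.snoc_castSucc]; rfl
  have hsnocr : Abarc.mulVec (ebar - zstar) = Abarc.mulVec (Fin.snoc w (γ ^ 2)) :=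
    congrArg Abarc.mulVec harg
  have hAw : ∀ i, (A.mulVec w) i ≤ γ ^ 2 * bc i := by
    intro i
    have hsing : (0 : Fin m → ℝ) ≤ Pi.single i 1 := by
      intro i'
      simp only [Pi.zero_apply, Pi.single_apply]
      split <;> norm_num
    have hk := hKle _ (hmemK (Pi.single i 1) hsing)
    rw [inner_symm_mulVec] at hk
    rw [WithLp.ofLp_sub, hsnocr] at hk
    have e : Pi.single i (1:ℝ) ⬝ᵥ (Abarc.mulVec (Fin.snoc w (γ ^ 2)))
        = (A.mulVec w) i - γ ^ 2 * bc i := by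
      rw [single_dotProduct, hrow, one_mul]
    rw [e] at hk
    linarith
  -- lower bound
  have hlow : ∀ v : Fin n → ℝ, A.mulVec v ≤ bc → 1 - γ ^ 2 ≤ ∑ j, w j * v j := by
    intro v hv
    have h1 : ⟪(WithLp.equiv 2 (Fin (n + 1) → ℝ)).symm (Fin.snoc v 1), zstar⟫ ≤ 0 := by
      rw [hzu, inner_symm_mulVec]
      have e : Abarc.mulVec ((WithLp.equiv 2 (Fin (n + 1) → ℝ)).symm (Fin.snoc v 1))
          = Abarc.mulVec (Fin.snoc v 1) := rfl
      rw [e]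
      refine Finset.sum_nonpos fun i _ => mul_nonpos_of_nonneg_of_nonpos (huz i) ?_
      rw [hrow, one_mul]
      have := hv i
      linarith
    have h2 : ⟪(WithLp.equiv 2 (Fin (n + 1) → ℝ)).symm (Fin.snoc v 1), ebar⟫ = 1 := by
      rw [hebar, euclid_inner]
      simp [EuclideanSpace.single_apply, WithLp.equiv_symm_apply, PiLp.toLp_apply, Fin.snoc_last]
    have h3 : ⟪(WithLp.equiv 2 (Fin (n + 1) → ℝ)).symm (Fin.snoc v 1), ebar - zstar⟫
        = (∑ j, w j * v j) + γ ^ 2 := by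
      rw [euclid_inner, Fin.sum_univ_castSucc]
      simp only [WithLp.equiv_symm_apply, PiLp.toLp_apply, Fin.snoc_castSucc, Fin.snoc_last, hrlast, one_mul]
      rw [hwdef]
      congr 1
      exact Finset.sum_congr rfl fun j _ => mul_comm _ _
    have h4 : ⟪(WithLp.equiv 2 (Fin (n + 1) → ℝ)).symm (Fin.snoc v 1), zstar⟫
        = ⟪(WithLp.equiv 2 (Fin (n + 1) → ℝ)).symm (Fin.snoc v 1), ebar⟫
          - ⟪(WithLp.equiv 2 (Fin (n + 1) → ℝ)).symm (Fin.snoc v 1), ebar - zstar⟫ := by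
      rw [inner_sub_right]; ring
    rw [h4, h2, h3] at h1
    linarith
  have hww : (∑ j, w j * w j) = γ ^ 2 - γ ^ 4 := by
    have h := hnormr
    rw [euclid_inner, Fin.sum_univ_castSucc, hrlast] at h
    have e : ∑ j : Fin n, (ebar - zstar) (Fin.castSucc j) * (ebar - zstar) (Fin.castSucc j)
        = ∑ j, w j * w j := by rw [hwdef]
    rw [e] at h
    nlinarith [h]
  -- define y
  set y : EuclideanSpace ℝ (Fin n) :=
    (WithLp.equiv 2 (Fin n → ℝ)).symm ((γ ^ 2)⁻¹ • w) with hydef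
  have hyapp : ∀ j, y j = (γ ^ 2)⁻¹ * w j := by
    intro j
    rw [hydef]
    simp [WithLp.equiv_symm_apply, PiLp.toLp_apply]
  refine ⟨hγpos, y, ?_, ?_⟩
  · -- (γ²)⁻¹ • (ebar - zstar) = snoc y 1
    ext j
    refine Fin.lastCases ?_ (fun j' => ?_) j
    · simp only [PiLp.smul_apply, smul_eq_mul, WithLp.equiv_symm_apply, PiLp.toLp_apply, Fin.snoc_last]
      rw [hrlast, inv_mul_cancel₀ hγ2]
    · simp only [PiLp.smul_apply, smul_eq_mul, WithLp.equiv_symm_apply, PiLp.toLp_apply, Fin.snoc_castSucc]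
      rw [hyapp j']
  · -- xstar = y + x0 - θ • c
    have hXconv : Convex ℝ X := by
      rw [hX]
      intro p hp q hq a a' ha ha' haa
      intro i
      have hpt : (A.mulVec (a • p + a' • q)) i = a * (A.mulVec p) i + a' * (A.mulVec q) i := by
        simp only [Matrix.mulVec, dotProduct, PiLp.add_apply, PiLp.smul_apply,
          Pi.add_apply, Pi.smul_apply, smul_eq_mul, mul_add, Finset.mul_sum]
        rw [← Finset.sum_add_distrib]
        exact Finset.sum_congr rfl fun j _ => by ring
      have h1 := hp i
      have h2 := hq i
      simp only [Set.mem_setOf_eq] at hp hq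
      have h1 := hp i
      have h2 := hq i
      calc (A.mulVec (a • p + a' • q)) i = a * (A.mulVec p) i + a' * (A.mulVec q) i := hpt
        _ ≤ a * b i + a' * b i := by
            have := mul_le_mul_of_nonneg_left h1 ha
            have := mul_le_mul_of_nonneg_left h2 ha'
            linarith
        _ = b i := by rw [← add_mul, haa, one_mul]
    have hyX : y + xb ∈ X := by
      rw [hX]
      intro i
      have h1 : (A.mulVec (y + xb)) i = (γ ^ 2)⁻¹ * (A.mulVec w) i + (A.mulVec xb) i := by
        simp only [Matrix.mulVec, dotProduct, PiLp.add_apply, Pi.add_apply, Finset.mul_sum]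
        rw [← Finset.sum_add_distrib]
        refine Finset.sum_congr rfl fun j _ => ?_
        rw [hyapp j]
        ring
      have h2 : (γ ^ 2)⁻¹ * (A.mulVec w) i ≤ bc i := by
        have := mul_le_mul_of_nonneg_left (hAw i) (le_of_lt (inv_pos.mpr hγ2pos))
        rwa [← mul_assoc, inv_mul_cancel₀ hγ2, one_mul] at this
      have h3 : bc i = b i - (A.mulVec xb) i := by rw [hbc]; simp [Pi.sub_apply]; rfl
      show (A.mulVec (y + xb)) i ≤ b i
      rw [h1]
      linarith
    have hyv : ∀ v : Fin n → ℝ, A.mulVec v ≤ bc → (∑ j, y j * y j) ≤ ∑ j, y j * v j := by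
      intro v hv
      have h1 := hlow v hv
      have e1 : (∑ j, y j * v j) = (γ ^ 2)⁻¹ * ∑ j, w j * v j := by
        rw [Finset.mul_sum]
        exact Finset.sum_congr rfl fun j _ => by rw [hyapp j]; ring
      have e2 : (∑ j, y j * y j) = (γ ^ 2)⁻¹ * ((γ ^ 2)⁻¹ * (γ ^ 2 - γ ^ 4)) := by
        rw [← hww, Finset.mul_sum, Finset.mul_sum]
        exact Finset.sum_congr rfl fun j _ => by rw [hyapp j]; ring
      have e3 : (γ ^ 2)⁻¹ * (γ ^ 2 - γ ^ 4) = 1 - γ ^ 2 := by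
        field_simp
      rw [e1, e2, e3]
      exact mul_le_mul_of_nonneg_left h1 (le_of_lt (inv_pos.mpr hγ2pos))
    have hVIy : ∀ z ∈ X, ⟪xb - (y + xb), z - (y + xb)⟫ ≤ 0 := by
      intro z hz
      have hAz : A.mulVec (fun j => z j - xb j) ≤ bc := by
        intro i
        have hz' : A.mulVec z ≤ b := by
          have h := hz; rw [hX] at h; exact h
        have e : (A.mulVec (fun j => z j - xb j)) i = (A.mulVec z) i - (A.mulVec xb) i := by
          simp only [Matrix.mulVec, dotProduct, mul_sub]
          rw [Finset.sum_sub_distrib]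
        rw [e, hbc]
        have := hz' i
        simp only [Pi.sub_apply]
        have hxbo : (A *ᵥ xb.ofLp) i = (A *ᵥ (x0.ofLp - θ • c.ofLp)) i := rfl
        linarith
      have h := hyv _ hAz
      rw [euclid_inner]
      have e : ∀ j, (xb - (y + xb)) j * (z - (y + xb)) j
          = -(y j * (z j - xb j)) + y j * y j := by
        intro j
        simp only [PiLp.sub_apply, PiLp.add_apply]
        ring
      rw [Finset.sum_congr rfl fun j _ => e j]
      rw [Finset.sum_add_distrib, Finset.sum_neg_distrib]
      simp only at h
      linarith
    have hminx : ∀ z ∈ X, dist xb xstar ≤ dist xb z := by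
      intro z hz
      rw [hxbdef]
      exact hproj θ hθ z hz
    have hVIx := proj_VI hXconv hxX hminx
    have h1 := hVIx (y + xb) hyX
    have h2 := hVIy xstar hxX
    have hsq : ⟪(y + xb) - xstar, (y + xb) - xstar⟫ ≤ 0 := by
      have key : ∀ dd aa : EuclideanSpace ℝ (Fin n), ⟪dd, dd⟫ = ⟪aa, dd⟫ + ⟪aa - dd, -dd⟫ := by
        intro dd aa
        rw [inner_neg_right, inner_sub_left]
        ring
      have h2' : ⟪(xb - xstar) - ((y + xb) - xstar), -((y + xb) - xstar)⟫ ≤ 0 := by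
        rw [show (xb - xstar) - ((y + xb) - xstar) = xb - (y + xb) by abel,
          show -((y + xb) - xstar) = xstar - (y + xb) by abel]
        exact h2
      rw [key ((y + xb) - xstar) (xb - xstar)]
      linarith
    have hfin : y + xb = xstar := by
      have h0 : (0:ℝ) ≤ ⟪(y + xb) - xstar, (y + xb) - xstar⟫ := real_inner_self_nonneg
      have : ⟪(y + xb) - xstar, (y + xb) - xstar⟫ = 0 := le_antisymm hsq h0
      have := inner_self_eq_zero.mp this
      exact sub_eq_zero.mp this
    rw [← hfin, hxbdef]
    abel
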